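/- Let ν < κ be regular uncountable cardinals with cf(ν, γ) < κ for all ν < γ < κ, and let μ = κ⁺. For each γ < μ fix a club T_γ ⊆ P_κ γ of size κ, and for each z ∈ ⋃_{γ<μ} T_γ fix a cofinal set C_z ⊆ P_ν z of size < κ; enumerate ⋃{C_z} as {c_ξ : ξ < μ}. Then the set T = {z ∈ ⋃_{γ<μ} T_γ : {c_ξ : ξ ∈ z} is cofinal in P_ν z} is stationary in P_κ μ. -/

import Mathlib

set_option autoImplicit false

open Cardinal Set

/-- `x` has cardinality `< c`. -/
def cardLT (x : Set Ordinal.{0}) (c : Cardinal.{0}) : Prop :=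
  Cardinal.mk ↥x < Cardinal.lift.{1, 0} c

/-- `x` has cardinality `≤ c`. -/
def cardLE (x : Set Ordinal.{0}) (c : Cardinal.{0}) : Prop :=
  Cardinal.mk ↥x ≤ Cardinal.lift.{1, 0} c

/-- `x` has cardinality `= c`. -/
def cardEQ (x : Set Ordinal.{0}) (c : Cardinal.{0}) : Prop :=
  Cardinal.mk ↥x = Cardinal.lift.{1, 0} c

/-- `P_κ Λ`: subsets of `{β | β < Λ}` of size `< κ`. -/
def pkl (κ : Cardinal.{0}) (Λ : Ordinal.{0}) : Set (Set Ordinal.{0}) :=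
  {x | x ⊆ Set.Iio Λ ∧ cardLT x κ}

/-- `C` is club in the ground family `X`: cofinal in `(X, ⊆)` and closed under
unions of `⊆`-increasing chains of length `< κ`. -/
def IsClubP (κ : Cardinal.{0}) (X C : Set (Set Ordinal.{0})) : Prop :=
  C ⊆ X ∧ (∀ x ∈ X, ∃ c ∈ C, x ⊆ c) ∧
  ∀ (δ : Ordinal.{0}) (f : Ordinal.{0} → Set Ordinal.{0}),
    δ ≠ 0 → δ < κ.ord →
    (∀ i j, i ≤ j → j < δ → f i ⊆ f j) →
    (∀ i < δ, f i ∈ C) →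
    (⋃ i ∈ Set.Iio δ, f i) ∈ C

/-- `S` is stationary in the ground family `X`: `S ⊆ X` and `S` meets every club. -/
def IsStatP (κ : Cardinal.{0}) (X S : Set (Set Ordinal.{0})) : Prop :=
  S ⊆ X ∧ ∀ C, IsClubP κ X C → (S ∩ C).Nonempty

/-- `C` is closed unbounded in the ordinal `κ`. -/
def IsClubIn (C : Set Ordinal.{0}) (κ : Ordinal.{0}) : Prop :=
  C ⊆ Set.Iio κ ∧ (∀ α < κ, ∃ β ∈ C, α ≤ β) ∧
  ∀ δ, δ ≠ 0 → δ < κ → (∀ α < δ, ∃ β ∈ C, α < β ∧ β < δ) → δ ∈ C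

/-- `S` is stationary in the ordinal `κ`. -/
def IsStatIn (S : Set Ordinal.{0}) (κ : Ordinal.{0}) : Prop :=
  S ⊆ Set.Iio κ ∧ ∀ C, IsClubIn C κ → (S ∩ C).Nonempty

/-- `C(f)`: the members of `P_κ Λ` closed under `f`. -/
def clubC (κ : Cardinal.{0}) (Λ : Ordinal.{0}) (f : Finset Ordinal.{0} → Set Ordinal.{0}) :
    Set (Set Ordinal.{0}) :=
  {x | x ∈ pkl κ Λ ∧ ∀ a : Finset Ordinal.{0}, ↑a ⊆ x → f a ⊆ x}

-- regularity lifts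
lemma TS_isRegular_lift {κ : Cardinal.{0}} (h : κ.IsRegular) :
    (Cardinal.lift.{1,0} κ).IsRegular := by
  constructor
  · exact aleph0_le_lift.2 h.1
  · rw [← Cardinal.lift_ord, ← Ordinal.lift_cof, h.cof_eq]

lemma TS_small_iUnion {κ : Cardinal.{0}} (hκ : κ.IsRegular) {ι : Type 1}
    (u : ι → Set Ordinal.{0}) (hι : #ι < Cardinal.lift.{1,0} κ)
    (hu : ∀ i, #(u i) < Cardinal.lift.{1,0} κ) : #(⋃ i, u i) < Cardinal.lift.{1,0} κ := by
  refine (mk_iUnion_le u).trans_lt ?_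
  exact Cardinal.mul_lt_of_lt (TS_isRegular_lift hκ).1 hι
    (Cardinal.iSup_lt_of_isRegular (TS_isRegular_lift hκ) hι hu)

lemma TS_small_union {κ : Cardinal.{0}} (hκ : Cardinal.aleph0 ≤ κ) {A B : Set Ordinal.{0}}
    (hA : #A < Cardinal.lift.{1,0} κ) (hB : #B < Cardinal.lift.{1,0} κ) :
    #(A ∪ B : Set Ordinal.{0}) < Cardinal.lift.{1,0} κ :=
  (mk_union_le A B).trans_lt (Cardinal.add_lt_of_lt (aleph0_le_lift.2 hκ) hA hB)

lemma TS_exists_strict_ub {ρ : Cardinal.{0}} (hρ : ρ.IsRegular) (S : Set Ordinal.{0})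
    (hb : S ⊆ Set.Iio ρ.ord) (hS : #S < Cardinal.lift.{1,0} ρ) :
    ∃ b < ρ.ord, ∀ o ∈ S, o < b := by
  obtain ⟨θ0, hθ0, hθeq⟩ := Cardinal.lt_lift_iff.1 hS
  rcases S.eq_empty_or_nonempty with rfl | hne
  · refine ⟨1, ?_, by simp⟩
    calc (1 : Ordinal.{0}) < Ordinal.omega0 := by simp [Ordinal.one_lt_omega0]
    _ = Cardinal.aleph0.ord := Cardinal.ord_aleph0.symm
    _ ≤ ρ.ord := Cardinal.ord_le_ord.2 hρ.1
  · have : Nonempty ↥S := hne.to_subtype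
    have heq : Cardinal.lift.{1,0} #(θ0.out) = Cardinal.lift.{0,1} #(↥S) := by
      rw [Cardinal.mk_out, hθeq, Cardinal.lift_id']
    obtain ⟨e⟩ := Cardinal.lift_mk_eq'.1 heq
    have hlim := Cardinal.isSuccLimit_ord hρ.1
    refine ⟨⨆ i : θ0.out, ((e i : Ordinal.{0}) + 1), ?_, ?_⟩
    · refine Cardinal.iSup_lt_ord_of_isRegular hρ (by rw [Cardinal.mk_out]; exact hθ0) ?_
      intro i
      rw [Ordinal.add_one_eq_succ]
      exact hlim.succ_lt (hb (e i).2)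
    · intro o ho
      have : o < (e (e.symm ⟨o, ho⟩) : Ordinal.{0}) + 1 := by simp
      exact this.trans_le (Ordinal.le_iSup (fun i : θ0.out => ((e i : Ordinal.{0}) + 1)) _)

def TS_it {ι : Type 1} (g : ι → ι → ι) (b : Set ι) : ℕ → Set ι
  | 0 => b
  | (n+1) => TS_it g b n ∪ Set.image2 g (TS_it g b n) (TS_it g b n)

def TS_cl {ι : Type 1} (g : ι → ι → ι) (b : Set ι) : Set ι :=
  ⋃ n : ULift.{1,0} ℕ, TS_it g b n.down

lemma TS_it_mono_succ {ι : Type 1} (g : ι → ι → ι) (b : Set ι) (n : ℕ) :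
    TS_it g b n ⊆ TS_it g b (n+1) := Set.subset_union_left

lemma TS_it_mono {ι : Type 1} (g : ι → ι → ι) (b : Set ι) {m n : ℕ} (h : m ≤ n) :
    TS_it g b m ⊆ TS_it g b n := by
  induction n with
  | zero => simpa [Nat.le_zero.1 h] using subset_rfl
  | succ k ih =>
    rcases Nat.lt_or_ge m (k+1) with h' | h'
    · exact (ih (Nat.lt_succ_iff.1 h')).trans (TS_it_mono_succ g b k)
    · have : m = k + 1 := le_antisymm h h'
      simp [this]

lemma TS_cl_sub {ι : Type 1} (g : ι → ι → ι) (b : Set ι) : b ⊆ TS_cl g b :=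
  fun x hx => Set.mem_iUnion.2 ⟨⟨0⟩, hx⟩

lemma TS_cl_closed {ι : Type 1} (g : ι → ι → ι) (b : Set ι) {x y : ι}
    (hx : x ∈ TS_cl g b) (hy : y ∈ TS_cl g b) : g x y ∈ TS_cl g b := by
  obtain ⟨n, hn⟩ := Set.mem_iUnion.1 hx
  obtain ⟨m, hm⟩ := Set.mem_iUnion.1 hy
  refine Set.mem_iUnion.2 ⟨⟨max n.down m.down + 1⟩, Or.inr ?_⟩
  exact Set.mem_image2_of_mem (TS_it_mono g b (le_max_left _ _) hn)
    (TS_it_mono g b (le_max_right _ _) hm)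

lemma TS_cl_mono {ι : Type 1} (g : ι → ι → ι) {b b' : Set ι} (h : b ⊆ b') :
    TS_cl g b ⊆ TS_cl g b' := by
  have : ∀ n, TS_it g b n ⊆ TS_it g b' n := by
    intro n; induction n with
    | zero => exact h
    | succ k ih => exact Set.union_subset_union ih (Set.image2_subset ih ih)
  exact Set.iUnion_mono fun n => this n.down

lemma TS_cl_card {ι : Type 1} (g : ι → ι → ι) (b : Set ι) :
    #(TS_cl g b) ≤ max #b Cardinal.aleph0 := by
  have hM : Cardinal.aleph0 ≤ max #b Cardinal.aleph0 := le_max_right _ _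
  have hit : ∀ n, #(TS_it g b n) ≤ max #b Cardinal.aleph0 := by
    intro n; induction n with
    | zero => exact le_max_left _ _
    | succ k ih =>
      refine (mk_union_le _ _).trans ?_
      have h2 : #(Set.image2 g (TS_it g b k) (TS_it g b k)) ≤ max #b Cardinal.aleph0 := by
        refine Cardinal.mk_image2_le.trans ?_
        calc #(TS_it g b k) * #(TS_it g b k) ≤ _ * _ := mul_le_mul' ih ih
        _ = max #b Cardinal.aleph0 := Cardinal.mul_eq_self hM
      calc #(TS_it g b k) + _ ≤ _ + _ := add_le_add ih h2
      _ = max #b Cardinal.aleph0 := Cardinal.add_eq_self hM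
  refine (mk_iUnion_le _).trans ?_
  have h1 : #(ULift.{1,0} ℕ) = Cardinal.aleph0 := by simp
  rw [h1]
  refine le_trans (mul_le_mul' hM ?_) (by rw [Cardinal.mul_eq_self hM])
  exact ciSup_le' fun n => hit n.down

lemma TS_DU {κ : Cardinal.{0}} (hκ : κ.IsRegular) (hκu : Cardinal.aleph0 < κ)
    {Λ : Ordinal.{0}} {D : Set (Set Ordinal.{0})} (hD : IsClubP κ (pkl κ Λ) D)
    (θ : Cardinal.{1}) :
    ∀ {ι : Type 1} (u : ι → Set Ordinal.{0}), Nonempty ι →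
      #ι ≤ θ → θ < Cardinal.lift.{1,0} κ → Directed (· ⊆ ·) u →
      (∀ i, u i ∈ D) → (⋃ i, u i) ∈ D := by
  induction θ using WellFoundedLT.induction with
  | _ θ IH =>
  intro ι u hne hle hlt hdir hmem
  have hι : #ι < Cardinal.lift.{1,0} κ := hle.trans_lt hlt
  by_cases hfin : #ι < Cardinal.aleph0
  · -- finite case
    have : Finite ι := Cardinal.lt_aleph0_iff_finite.1 hfin
    have : Fintype ι := Fintype.ofFinite ι
    obtain ⟨z, hz⟩ := hdir.finset_le Finset.univ
    have : ⋃ i, u i = u z :=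
      subset_antisymm (Set.iUnion_subset fun i => hz i (Finset.mem_univ i)) (Set.subset_iUnion u z)
    rw [this]; exact hmem z
  · push_neg at hfin
    choose ub hub1 hub2 using hdir
    by_cases hcnt : #ι ≤ Cardinal.aleph0
    · -- countable chain case
      have : Countable ι := Cardinal.mk_le_aleph0_iff.1 hcnt
      obtain ⟨s, hs⟩ := exists_surjective_nat ι
      let v : ℕ → ι := fun n => Nat.rec (s 0) (fun n vn => ub vn (s (n+1))) n
      have hv1 : ∀ n, u (v n) ⊆ u (v (n+1)) := fun n => hub1 _ _
      have hv2 : ∀ n, u (s n) ⊆ u (v n) := by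
        intro n; cases n with
        | zero => exact subset_rfl
        | succ k => exact hub2 _ _
      have hvmono : ∀ m n, m ≤ n → u (v m) ⊆ u (v n) := by
        intro m n h
        induction n with
        | zero => simp [Nat.le_zero.1 h]
        | succ k ih =>
          rcases Nat.lt_or_ge m (k+1) with h' | h'
          · exact (ih (Nat.lt_succ_iff.1 h')).trans (hv1 k)
          · have : m = k + 1 := le_antisymm h h'
            simp [this]
      set F : Ordinal.{0} → Set Ordinal.{0} :=
        fun o => ⋃ (n : ℕ) (_ : (n : Ordinal.{0}) ≤ o), u (v n) with hF
      have hFmono : ∀ i j, i ≤ j → j < Ordinal.omega0 → F i ⊆ F j := by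
        intro i j hij _ x hx
        simp only [hF, Set.mem_iUnion] at hx ⊢
        obtain ⟨n, hn, hx⟩ := hx
        exact ⟨n, hn.trans hij, hx⟩
      have hFnat : ∀ n : ℕ, F (n : Ordinal.{0}) = u (v n) := by
        intro n
        refine subset_antisymm ?_ ?_
        · refine Set.iUnion₂_subset fun m hm => ?_
          exact hvmono m n (by exact_mod_cast hm)
        · intro x hx
          simp only [hF, Set.mem_iUnion]
          exact ⟨n, le_rfl, hx⟩
      have hFD : ∀ o < Ordinal.omega0, F o ∈ D := by
        intro o ho
        obtain ⟨n, rfl⟩ := Ordinal.lt_omega0.1 ho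
        rw [hFnat]; exact hmem _
      have homega : Ordinal.omega0 < κ.ord := by
        rw [← Cardinal.ord_aleph0]; exact Cardinal.ord_lt_ord.2 hκu
      have hmem2 := hD.2.2 Ordinal.omega0 F Ordinal.omega0_ne_zero homega hFmono hFD
      have : (⋃ o ∈ Set.Iio Ordinal.omega0, F o) = ⋃ i, u i := by
        refine subset_antisymm ?_ ?_
        · refine Set.iUnion₂_subset fun o _ => Set.iUnion₂_subset fun n _ => ?_
          exact Set.subset_iUnion u (v n)
        · refine Set.iUnion_subset fun i => ?_
          obtain ⟨n, rfl⟩ := hs i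
          refine (hv2 n).trans ?_
          intro x hx
          simp only [Set.mem_iUnion]
          exact ⟨(n : Ordinal.{0}), Ordinal.nat_lt_omega0 n, (hFnat n).symm ▸ hx⟩
      rwa [this] at hmem2
    · -- uncountable case
      push_neg at hcnt
      obtain ⟨θ0, hθ0κ, hθ0eq⟩ := Cardinal.lt_lift_iff.1 hι
      have hθ0inf : Cardinal.aleph0 ≤ θ0 := by
        by_contra h
        push_neg at h
        have : #ι < Cardinal.aleph0 := by
          rw [← hθ0eq, ← Cardinal.lift_aleph0.{1,0}]
          exact Cardinal.lift_lt.2 h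
        exact absurd this (not_lt.2 hfin)
      set δ := θ0.ord with hδ
      have hδ0 : (0 : Ordinal.{0}) < δ :=
        lt_of_lt_of_le Ordinal.omega0_pos
          (by rw [← Cardinal.ord_aleph0]; exact Cardinal.ord_le_ord.2 hθ0inf)
      have hδlim : Order.IsSuccLimit δ := Cardinal.isSuccLimit_ord hθ0inf
      have hmkIio : #(Set.Iio δ) = #ι := by
        rw [Ordinal.mk_Iio_ordinal, Cardinal.card_ord, hθ0eq]
      obtain ⟨e⟩ : Nonempty (↥(Set.Iio δ) ≃ ι) := Cardinal.eq.1 hmkIio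
      set i₀ : ι := e ⟨0, hδ0⟩ with hi₀
      set J : Ordinal.{0} → Set ι :=
        fun o => TS_cl ub (insert i₀ (e '' {β : ↥(Set.Iio δ) | β.val < o})) with hJ
      have hJmono : ∀ {o o'}, o ≤ o' → J o ⊆ J o' := by
        intro o o' h
        exact TS_cl_mono ub (Set.insert_subset_insert
          (Set.image_mono fun β hβ => lt_of_lt_of_le hβ h))
      set F : Ordinal.{0} → Set Ordinal.{0} := fun o => ⋃ i ∈ J o, u i with hFdef
      have hFmono : ∀ i j, i ≤ j → j < δ → F i ⊆ F j := by
        intro i j hij _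
        exact Set.iUnion_mono fun k => Set.iUnion_mono' fun hk => ⟨hJmono hij hk, subset_rfl⟩
      have hJD : ∀ o, o < δ → F o ∈ D := by
        intro o ho
        have hbase : #(insert i₀ (e '' {β : ↥(Set.Iio δ) | β.val < o}) : Set ι) < #ι := by
          refine (Cardinal.mk_insert_le).trans_lt ?_
          have h1 : #(e '' {β : ↥(Set.Iio δ) | β.val < o}) ≤ Cardinal.lift.{1,0} o.card := by
            refine Cardinal.mk_image_le.trans ?_
            have : #{β : ↥(Set.Iio δ) | β.val < o} ≤ #(Set.Iio o) := by
              refine Cardinal.mk_le_of_injective (f := fun β => (⟨β.val.val, β.2⟩ : Set.Iio o)) ?_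
              intro a b hab
              exact Subtype.ext (Subtype.ext (Subtype.mk_eq_mk.1 hab))
            rwa [Ordinal.mk_Iio_ordinal] at this
          have h2 : Cardinal.lift.{1,0} o.card < #ι := by
            rw [← hθ0eq]
            exact Cardinal.lift_lt.2 (Cardinal.lt_ord.1 ho)
          refine Cardinal.add_lt_of_lt hfin (h1.trans_lt h2) ?_
          exact lt_of_lt_of_le Cardinal.one_lt_aleph0 hfin
        have hcard : #(J o) < #ι := by
          refine (TS_cl_card ub _).trans_lt ?_
          exact max_lt hbase hcnt
        have hJne : Nonempty (↥(J o)) :=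
          ⟨⟨i₀, TS_cl_sub ub _ (Set.mem_insert _ _)⟩⟩
        have hres := IH (#(J o)) (hcard.trans_le hle) (ι := ↥(J o))
          (fun k => u k.val) hJne le_rfl (hcard.trans_le (hle.trans hlt.le)) ?_ (fun k => hmem _)
        · have : (⋃ k : ↥(J o), u k.val) = F o := by
            rw [hFdef]
            exact (Set.biUnion_eq_iUnion (J o) fun x _ => u x).symm
          rwa [this] at hres
        · intro a b
          refine ⟨⟨ub a.val b.val, TS_cl_closed ub _ a.2 b.2⟩, hub1 _ _, hub2 _ _⟩
      have hδκ : δ < κ.ord := Cardinal.ord_lt_ord.2 hθ0κ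
      have hmem2 := hD.2.2 δ F hδ0.ne' hδκ hFmono hJD
      have : (⋃ o ∈ Set.Iio δ, F o) = ⋃ i, u i := by
        refine subset_antisymm ?_ ?_
        · refine Set.iUnion₂_subset fun o _ => Set.iUnion₂_subset fun i _ => ?_
          exact Set.subset_iUnion u i
        · refine Set.iUnion_subset fun i => ?_
          set β : ↥(Set.Iio δ) := e.symm i with hβ
          have h1 : β.val + 1 < δ := by
            rw [Ordinal.add_one_eq_succ]
            exact hδlim.succ_lt β.2
          have h2 : i ∈ J (β.val + 1) := by
            refine TS_cl_sub ub _ (Set.mem_insert_of_mem _ ?_)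
            refine ⟨β, ?_, by simp [hβ]⟩
            simp [Order.lt_add_one_iff]
          refine le_trans ?_ (Set.subset_iUnion₂ (s := fun o _ => F o) (β.val + 1) h1)
          exact Set.subset_iUnion₂ (s := fun i _ => u i) i h2
      rwa [this] at hmem2

lemma TS_pkl_empty {κ : Cardinal.{0}} {Λ : Ordinal.{0}} (hκ0 : 0 < κ) :
    (∅ : Set Ordinal.{0}) ∈ pkl κ Λ := by
  refine ⟨Set.empty_subset _, ?_⟩
  unfold cardLT
  simp only [Cardinal.mk_emptyCollection]
  have : Cardinal.lift.{1,0} 0 < Cardinal.lift.{1,0} κ := Cardinal.lift_lt.2 hκ0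
  simpa using this

lemma TS_cardLT_of_finite {κ : Cardinal.{0}} {x : Set Ordinal.{0}} (hx : x.Finite)
    (hκ : Cardinal.aleph0 ≤ κ) : cardLT x κ := by
  unfold cardLT
  exact lt_of_lt_of_le (Cardinal.lt_aleph0_iff_finite.2 hx)
    (by rw [← Cardinal.lift_aleph0.{1,0}]; exact Cardinal.lift_le.2 hκ)

lemma TS_menas {κ : Cardinal.{0}} (hκ : κ.IsRegular) (hκu : Cardinal.aleph0 < κ)
    {Λ : Ordinal.{0}} {D : Set (Set Ordinal.{0})} (hD : IsClubP κ (pkl κ Λ) D) :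
    ∃ f : Finset Ordinal.{0} → Set Ordinal.{0},
      (∀ a, f a ∈ pkl κ Λ) ∧
      (∀ a : Finset Ordinal.{0}, ↑a ⊆ Set.Iio Λ → (↑a : Set Ordinal.{0}) ⊆ f a ∧ f a ∈ D) ∧
      (∀ x ∈ pkl κ Λ, (∀ a : Finset Ordinal.{0}, ↑a ⊆ x → f a ⊆ x) → x ∈ D) := by
  classical
  have hκ0 : (0:Cardinal.{0}) < κ := lt_of_le_of_lt (by positivity) hκu
  set cov : Set Ordinal.{0} → Set Ordinal.{0} :=
    fun X => if h : X ∈ pkl κ Λ then (hD.2.1 X h).choose else ∅ with hcov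
  have hcovspec : ∀ X ∈ pkl κ Λ, cov X ∈ D ∧ X ⊆ cov X := by
    intro X hX
    rw [hcov]; simp only [hX, dif_pos]
    obtain ⟨h1, h2⟩ := (hD.2.1 X hX).choose_spec
    exact ⟨h1, h2⟩
  -- iterates
  set G : ℕ → Finset Ordinal.{0} → Set Ordinal.{0} :=
    fun n => Nat.rec (fun a => cov ↑a)
      (fun _ Gn a => cov (↑a ∪ ⋃ b : {b // b ∈ a.powerset}, Gn b.val)) n with hG
  have hGzero : ∀ a, G 0 a = cov ↑a := fun a => rfl
  have hGsucc : ∀ n a, G (n+1) a = cov (↑a ∪ ⋃ b : {b // b ∈ a.powerset}, G n b.val) :=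
    fun n a => rfl
  -- the argument of each cover is in pkl, and G n a ∈ D, by induction on n
  have key : ∀ n, ∀ a : Finset Ordinal.{0}, ↑a ⊆ Set.Iio Λ →
      G n a ∈ D ∧ (↑a : Set Ordinal.{0}) ⊆ G n a := by
    intro n
    induction n with
    | zero =>
      intro a ha
      have hapkl : (↑a : Set Ordinal.{0}) ∈ pkl κ Λ :=
        ⟨ha, TS_cardLT_of_finite (a.finite_toSet) hκ.1⟩
      exact ⟨(hcovspec _ hapkl).1, (hcovspec _ hapkl).2⟩
    | succ n ih =>
      intro a ha
      have harg : (↑a ∪ ⋃ b : {b // b ∈ a.powerset}, G n b.val) ∈ pkl κ Λ := by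
        constructor
        · refine Set.union_subset ha ?_
          refine Set.iUnion_subset fun b => ?_
          have hb : (↑b.val : Set Ordinal.{0}) ⊆ Set.Iio Λ :=
            le_trans (by exact_mod_cast Finset.mem_powerset.1 b.2) ha
          exact (hD.1 (ih b.val hb).1).1
        · refine TS_small_union hκ.1 (TS_cardLT_of_finite (a.finite_toSet) hκ.1) ?_
          refine TS_small_iUnion hκ (fun b : {b // b ∈ a.powerset} => G n b.val) ?_ ?_
          · refine lt_of_lt_of_le (Cardinal.lt_aleph0_of_finite _) ?_
            rw [← Cardinal.lift_aleph0.{1,0}]; exact Cardinal.lift_le.2 hκ.1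
          · intro b
            have hb : (↑b.val : Set Ordinal.{0}) ⊆ Set.Iio Λ :=
              le_trans (by exact_mod_cast Finset.mem_powerset.1 b.2) ha
            exact (hD.1 (ih b.val hb).1).2
      rw [hGsucc]
      refine ⟨(hcovspec _ harg).1, le_trans ?_ (hcovspec _ harg).2⟩
      exact Set.subset_union_left
  -- monotone in n
  have hGn_mono : ∀ n a, ↑a ⊆ Set.Iio Λ → G n a ⊆ G (n+1) a := by
    intro n a ha
    rw [hGsucc]
    have harg : (↑a ∪ ⋃ b : {b // b ∈ a.powerset}, G n b.val) ∈ pkl κ Λ := by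
      constructor
      · refine Set.union_subset ha ?_
        refine Set.iUnion_subset fun b => ?_
        have hb : (↑b.val : Set Ordinal.{0}) ⊆ Set.Iio Λ :=
          le_trans (by exact_mod_cast Finset.mem_powerset.1 b.2) ha
        exact (hD.1 (key n b.val hb).1).1
      · refine TS_small_union hκ.1 (TS_cardLT_of_finite (a.finite_toSet) hκ.1) ?_
        refine TS_small_iUnion hκ (fun b : {b // b ∈ a.powerset} => G n b.val) ?_ ?_
        · refine lt_of_lt_of_le (Cardinal.lt_aleph0_of_finite _) ?_
          rw [← Cardinal.lift_aleph0.{1,0}]; exact Cardinal.lift_le.2 hκ.1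
        · intro b
          have hb : (↑b.val : Set Ordinal.{0}) ⊆ Set.Iio Λ :=
            le_trans (by exact_mod_cast Finset.mem_powerset.1 b.2) ha
          exact (hD.1 (key n b.val hb).1).2
    refine le_trans ?_ (hcovspec _ harg).2
    refine le_trans ?_ Set.subset_union_right
    intro o ho
    exact Set.mem_iUnion.2 ⟨⟨a, Finset.mem_powerset.2 subset_rfl⟩, ho⟩
  have hGn_mono' : ∀ m n a, m ≤ n → ↑a ⊆ Set.Iio Λ → G m a ⊆ G n a := by
    intro m n a h ha
    induction n with
    | zero => simp [Nat.le_zero.1 h]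
    | succ k ih =>
      rcases Nat.lt_or_ge m (k+1) with h' | h'
      · exact (ih (Nat.lt_succ_iff.1 h')).trans (hGn_mono k a ha)
      · have : m = k + 1 := le_antisymm h h'
        simp [this]
  set f : Finset Ordinal.{0} → Set Ordinal.{0} :=
    fun a => if ↑a ⊆ Set.Iio Λ then G a.card a else ∅ with hf
  have hfval : ∀ a : Finset Ordinal.{0}, ↑a ⊆ Set.Iio Λ → f a = G a.card a := by
    intro a ha; rw [hf]; simp [ha]
  have hfD : ∀ a : Finset Ordinal.{0}, ↑a ⊆ Set.Iio Λ →
      (↑a : Set Ordinal.{0}) ⊆ f a ∧ f a ∈ D := by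
    intro a ha
    rw [hfval a ha]
    exact ⟨(key _ a ha).2, (key _ a ha).1⟩
  have hfmono : ∀ a b : Finset Ordinal.{0}, ↑b ⊆ Set.Iio Λ → a ⊆ b → f a ⊆ f b := by
    intro a b hb hab
    rcases eq_or_ne a b with rfl | hne
    · exact subset_rfl
    · have hssub : a ⊂ b := ssubset_of_ne_of_subset hne hab
      have ha : (↑a : Set Ordinal.{0}) ⊆ Set.Iio Λ := le_trans (by exact_mod_cast hab) hb
      have hcard : a.card < b.card := Finset.card_lt_card hssub
      rw [hfval a ha, hfval b hb]
      obtain ⟨m, hm⟩ : ∃ m, b.card = m + 1 := ⟨b.card - 1, by omega⟩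
      rw [hm]
      have h1 : G a.card a ⊆ G m a := hGn_mono' a.card m a (by omega) ha
      refine h1.trans ?_
      rw [hGsucc]
      have harg : (↑b ∪ ⋃ c : {c // c ∈ b.powerset}, G m c.val) ∈ pkl κ Λ := by
        constructor
        · refine Set.union_subset hb ?_
          refine Set.iUnion_subset fun c => ?_
          have hc : (↑c.val : Set Ordinal.{0}) ⊆ Set.Iio Λ :=
            le_trans (by exact_mod_cast Finset.mem_powerset.1 c.2) hb
          exact (hD.1 (key m c.val hc).1).1
        · refine TS_small_union hκ.1 (TS_cardLT_of_finite (b.finite_toSet) hκ.1) ?_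
          refine TS_small_iUnion hκ (fun c : {c // c ∈ b.powerset} => G m c.val) ?_ ?_
          · refine lt_of_lt_of_le (Cardinal.lt_aleph0_of_finite _) ?_
            rw [← Cardinal.lift_aleph0.{1,0}]; exact Cardinal.lift_le.2 hκ.1
          · intro c
            have hc : (↑c.val : Set Ordinal.{0}) ⊆ Set.Iio Λ :=
              le_trans (by exact_mod_cast Finset.mem_powerset.1 c.2) hb
            exact (hD.1 (key m c.val hc).1).2
      refine le_trans ?_ (hcovspec _ harg).2
      refine le_trans ?_ Set.subset_union_right
      intro o ho
      exact Set.mem_iUnion.2 ⟨⟨a, Finset.mem_powerset.2 hab⟩, ho⟩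
  refine ⟨f, ?_, hfD, ?_⟩
  · intro a
    by_cases ha : (↑a : Set Ordinal.{0}) ⊆ Set.Iio Λ
    · exact hD.1 (hfD a ha).2
    · rw [hf]; simp only [ha, if_false]
      exact TS_pkl_empty hκ0
  · -- closure points are in D
    intro x hx hcl
    set u : Finset ↥x → Set Ordinal.{0} := fun s => f (s.image Subtype.val) with hu
    have himsub : ∀ s : Finset ↥x, ↑(s.image Subtype.val) ⊆ x := by
      intro s o ho
      simp only [Finset.coe_image, Set.mem_image] at ho
      obtain ⟨p, _, rfl⟩ := ho
      exact p.2
    have humem : ∀ s, u s ∈ D := by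
      intro s
      exact (hfD _ ((himsub s).trans hx.1)).2
    have hudir : Directed (· ⊆ ·) u := by
      intro s t
      refine ⟨s ∪ t, ?_, ?_⟩
      · refine hfmono _ _ (((himsub _)).trans hx.1) ?_
        rw [Finset.image_union]; exact Finset.subset_union_left
      · refine hfmono _ _ (((himsub _)).trans hx.1) ?_
        rw [Finset.image_union]; exact Finset.subset_union_right
    have hucard : #(Finset ↥x) < Cardinal.lift.{1,0} κ := by
      by_cases hfin : x.Finite
      · have : Fintype ↥x := hfin.fintype
        refine lt_of_lt_of_le (Cardinal.lt_aleph0_of_finite _) ?_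
        rw [← Cardinal.lift_aleph0.{1,0}]; exact Cardinal.lift_le.2 hκ.1
      · have : Infinite ↥x := Set.infinite_coe_iff.2 hfin
        rw [Cardinal.mk_finset_of_infinite]
        exact hx.2
    have hUD := TS_DU hκ hκu hD (#(Finset ↥x)) u ⟨∅⟩ le_rfl hucard hudir humem
    have : (⋃ s, u s) = x := by
      refine subset_antisymm ?_ ?_
      · refine Set.iUnion_subset fun s => ?_
        exact hcl _ (himsub s)
      · intro o ho
        refine Set.mem_iUnion.2 ⟨{⟨o, ho⟩}, ?_⟩
        have him : ↑(({⟨o, ho⟩} : Finset ↥x).image Subtype.val) ⊆ Set.Iio Λ :=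
          (himsub _).trans hx.1
        refine (hfD _ him).1 ?_
        simp
    rwa [this] at hUD

lemma TS_cofinal_small {ν κ : Cardinal.{0}} (hν : ν.IsRegular) (hκ : κ.IsRegular)
    (hνκ : ν < κ)
    (hcf : ∀ γ : Ordinal.{0}, ν.ord < γ → γ < κ.ord →
      ∃ θ : Ordinal.{0}, θ < κ.ord ∧ ∃ d : Ordinal.{0} → Set Ordinal.{0},
        (∀ ξ < θ, d ξ ⊆ Set.Iio γ ∧ cardLT (d ξ) ν) ∧
        ∀ x : Set Ordinal.{0}, x ⊆ Set.Iio γ → cardLT x ν → ∃ ξ < θ, x ⊆ d ξ)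
    (W : Set Ordinal.{0}) (hW : cardLT W κ) :
    ∃ Y : Set (Set Ordinal.{0}), #↥Y < Cardinal.lift.{1,0} κ ∧
      (∀ y ∈ Y, y ⊆ W ∧ cardLT y ν) ∧
      (∀ x : Set Ordinal.{0}, x ⊆ W → cardLT x ν → ∃ y ∈ Y, x ⊆ y) := by
  classical
  obtain ⟨lam, hlamκ, hlameq⟩ := Cardinal.lt_lift_iff.1 hW
  set γ1 := lam.ord with hγ1
  have hmk : #↥W = #↥(Set.Iio γ1) := by
    rw [Ordinal.mk_Iio_ordinal, Cardinal.card_ord, hlameq]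
  obtain ⟨e⟩ : Nonempty (↥W ≃ ↥(Set.Iio γ1)) := Cardinal.eq.1 hmk
  set γ : Ordinal.{0} := γ1 + (ν.ord + 1) with hγ
  have hγν : ν.ord < γ := by
    calc ν.ord < ν.ord + 1 := lt_add_one _
    _ ≤ γ1 + (ν.ord + 1) := le_add_self
  have hγκ : γ < κ.ord := by
    rw [Cardinal.lt_ord, hγ, Ordinal.card_add, Ordinal.card_add, Ordinal.card_one,
      Cardinal.card_ord, Cardinal.card_ord]
    exact Cardinal.add_lt_of_lt hκ.1 hlamκ
      (Cardinal.add_lt_of_lt hκ.1 hνκ (lt_of_lt_of_le Cardinal.one_lt_aleph0 hκ.1))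
  have hγ1γ : Set.Iio γ1 ⊆ Set.Iio γ := fun o ho =>
    lt_of_lt_of_le ho (le_self_add : γ1 ≤ γ1 + (ν.ord + 1))
  obtain ⟨θ, hθκ, d, hd1, hd2⟩ := hcf γ hγν hγκ
  set pull : Ordinal.{0} → Set Ordinal.{0} := fun ξ =>
    {o : Ordinal.{0} | ∃ h : o ∈ W, ((e ⟨o, h⟩ : ↥(Set.Iio γ1)) : Ordinal.{0}) ∈ d ξ} with hpull
  refine ⟨Set.range (fun ξ : ↥(Set.Iio θ) => pull ξ.val), ?_, ?_, ?_⟩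
  · refine lt_of_le_of_lt Cardinal.mk_range_le ?_
    rw [Ordinal.mk_Iio_ordinal]
    exact Cardinal.lift_lt.2 (Cardinal.lt_ord.1 hθκ)
  · rintro y ⟨ξ, rfl⟩
    constructor
    · intro o ho; exact ho.1
    · have hinj : Function.Injective
          (fun o : ↥(pull ξ.val) => (⟨((e ⟨o.val, o.2.choose⟩ : ↥(Set.Iio γ1)) : Ordinal.{0}),
            o.2.choose_spec⟩ : ↥(d ξ.val))) := by
        intro p q hpq
        have h1 : ((e ⟨p.val, p.2.choose⟩ : ↥(Set.Iio γ1)) : Ordinal.{0})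
            = ((e ⟨q.val, q.2.choose⟩ : ↥(Set.Iio γ1)) : Ordinal.{0}) :=
          Subtype.mk_eq_mk.1 hpq
        have h2 : (⟨p.val, p.2.choose⟩ : ↥W) = ⟨q.val, q.2.choose⟩ :=
          e.injective (Subtype.ext h1)
        exact Subtype.ext (Subtype.mk_eq_mk.1 h2)
      exact lt_of_le_of_lt (Cardinal.mk_le_of_injective hinj) (hd1 ξ.val ξ.2).2
  · intro x hxW hxν
    set jx : Set Ordinal.{0} :=
      Set.range (fun o : ↥x => ((e ⟨o.val, hxW o.2⟩ : ↥(Set.Iio γ1)) : Ordinal.{0})) with hjx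
    have hjx1 : jx ⊆ Set.Iio γ := by
      rintro _ ⟨o, rfl⟩
      exact hγ1γ (e ⟨o.val, hxW o.2⟩).2
    have hjx2 : cardLT jx ν := lt_of_le_of_lt Cardinal.mk_range_le hxν
    obtain ⟨ξ, hξθ, hsub⟩ := hd2 jx hjx1 hjx2
    refine ⟨pull ξ, ⟨⟨ξ, hξθ⟩, rfl⟩, ?_⟩
    intro o ho
    refine ⟨hxW ho, ?_⟩
    have : ((e ⟨o, hxW ho⟩ : ↥(Set.Iio γ1)) : Ordinal.{0}) ∈ jx := ⟨⟨o, ho⟩, rfl⟩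
    exact hsub this

lemma TS_mk_finset_le {α : Type 1} : #(Finset α) ≤ max #α Cardinal.aleph0 := by
  by_cases h : Finite α
  · have : Fintype α := Fintype.ofFinite α
    exact le_trans (Cardinal.lt_aleph0_of_finite (Finset α)).le (le_max_right _ _)
  · have : Infinite α := not_finite_iff_infinite.1 h
    rw [Cardinal.mk_finset_of_infinite]
    exact le_max_left _ _

lemma TS_mk_finsub_le (W : Set Ordinal.{0}) :
    #{a : Finset Ordinal.{0} // ↑a ⊆ W} ≤ max #↥W Cardinal.aleph0 := by
  classical
  have hinj : Function.Injective
      (fun p : {a : Finset Ordinal.{0} // ↑a ⊆ W} =>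
        p.val.preimage (Subtype.val : ↥W → Ordinal.{0}) Subtype.val_injective.injOn) := by
    intro p q hpq
    simp only at hpq
    refine Subtype.ext (Finset.ext fun o => ?_)
    constructor
    · intro ho
      have h1 : (⟨o, p.2 ho⟩ : ↥W) ∈ p.val.preimage Subtype.val Subtype.val_injective.injOn :=
        Finset.mem_preimage.2 ho
      rw [hpq] at h1
      exact Finset.mem_preimage.1 h1
    · intro ho
      have h1 : (⟨o, q.2 ho⟩ : ↥W) ∈ q.val.preimage Subtype.val Subtype.val_injective.injOn :=
        Finset.mem_preimage.2 ho
      rw [← hpq] at h1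
      exact Finset.mem_preimage.1 h1
  exact le_trans (Cardinal.mk_le_of_injective hinj) TS_mk_finset_le

/-- Let `ν < κ` be regular uncountable with `cf(ν, γ) < κ` for all `ν < γ < κ`, and let
`μ = κ⁺`.  Given clubs `T γ ⊆ P_κ γ` of size `≤ κ` for `γ < μ`, cofinal sets
`C z ⊆ P_ν z` of size `< κ` for `z ∈ ⋃ T γ`, and an enumeration `⟨c_ξ : ξ < μ⟩` of
`⋃ C z`, the set `T* = {z ∈ ⋃ T γ : {c_ξ : ξ ∈ z}` is cofinal in `P_ν z}` is stationary
in `P_κ μ`. -/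
theorem T_stationary (ν κ : Cardinal.{0})
    (hν : ν.IsRegular) (hνu : Cardinal.aleph0 < ν)
    (hκ : κ.IsRegular) (hκu : Cardinal.aleph0 < κ) (hνκ : ν < κ)
    (hcf : ∀ γ : Ordinal.{0}, ν.ord < γ → γ < κ.ord →
      ∃ θ : Ordinal.{0}, θ < κ.ord ∧ ∃ d : Ordinal.{0} → Set Ordinal.{0},
        (∀ ξ < θ, d ξ ⊆ Set.Iio γ ∧ cardLT (d ξ) ν) ∧
        ∀ x : Set Ordinal.{0}, x ⊆ Set.Iio γ → cardLT x ν → ∃ ξ < θ, x ⊆ d ξ)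
    (T : Ordinal.{0} → Set (Set Ordinal.{0}))
    (hT : ∀ γ < (Order.succ κ).ord,
      IsClubP κ (pkl κ γ) (T γ) ∧ Cardinal.mk ↥(T γ) ≤ Cardinal.lift.{1, 0} κ)
    (C : Set Ordinal.{0} → Set (Set Ordinal.{0}))
    (hC : ∀ γ < (Order.succ κ).ord, ∀ z ∈ T γ,
      (∀ y ∈ C z, y ⊆ z ∧ cardLT y ν) ∧
      (∀ y : Set Ordinal.{0}, y ⊆ z → cardLT y ν → ∃ w ∈ C z, y ⊆ w) ∧
      Cardinal.mk ↥(C z) < Cardinal.lift.{1, 0} κ)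
    (c : Ordinal.{0} → Set Ordinal.{0})
    (hc : c '' Set.Iio (Order.succ κ).ord =
      ⋃ γ ∈ Set.Iio (Order.succ κ).ord, ⋃ z ∈ T γ, C z) :
    IsStatP κ (pkl κ (Order.succ κ).ord)
      {z | (∃ γ < (Order.succ κ).ord, z ∈ T γ) ∧
        ∀ y : Set Ordinal.{0}, y ⊆ z → cardLT y ν → ∃ ξ ∈ z, y ⊆ c ξ} := by

  classical
  set μo : Ordinal.{0} := (Order.succ κ).ord with hμo
  have hsucc : (Order.succ κ).IsRegular := Cardinal.isRegular_succ hκ.1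
  have hμinf : Cardinal.aleph0 ≤ Order.succ κ := hκ.1.trans (Order.le_succ κ)
  have hμlim : Order.IsSuccLimit μo := Cardinal.isSuccLimit_ord hμinf
  have hκμ : κ.ord < μo := Cardinal.ord_lt_ord.2 (Order.lt_succ κ)
  have hνκo : ν.ord < κ.ord := Cardinal.ord_lt_ord.2 hνκ
  have hνlim : Order.IsSuccLimit ν.ord := Cardinal.isSuccLimit_ord hν.1
  have hκlim : Order.IsSuccLimit κ.ord := Cardinal.isSuccLimit_ord hκ.1
  have hν0 : (0 : Ordinal.{0}) < ν.ord := hνlim.pos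
  constructor
  · -- the target set is a subset of pkl κ μo
    rintro z ⟨⟨γ, hγ, hzT⟩, -⟩
    have hz := (hT γ hγ).1.1 hzT
    exact ⟨hz.1.trans (fun o (ho : o < γ) => lt_trans ho hγ), hz.2⟩
  intro D hD
  obtain ⟨f, hf1, hf2, hf3⟩ := TS_menas hκ hκu hD
  -- index choice function
  set idx : Set Ordinal.{0} → Ordinal.{0} :=
    fun w' => if h : ∃ ξ < μo, c ξ = w' then h.choose else 0 with hidxdef
  have hidx : ∀ γ' < μo, ∀ z ∈ T γ', ∀ w' ∈ C z, idx w' < μo ∧ c (idx w') = w' := by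
    intro γ' hγ' z hz w' hw'
    have hmem : w' ∈ c '' Set.Iio μo := by
      rw [hc]
      exact Set.mem_biUnion hγ' (Set.mem_biUnion hz hw')
    obtain ⟨ξ, hξ, hcξ⟩ := hmem
    have hex : ∃ ξ < μo, c ξ = w' := ⟨ξ, hξ, hcξ⟩
    rw [hidxdef]
    simp only [hex, dif_pos]
    exact ⟨hex.choose_spec.1, hex.choose_spec.2⟩
  -- the closure sets A γ, and their strict upper bounds H γ < μo
  set A : Ordinal.{0} → Set Ordinal.{0} := fun γ =>
    (⋃ p : {a : Finset Ordinal.{0} // ↑a ⊆ Set.Iio γ}, (fun o => o + 1) '' f p.val) ∪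
    (⋃ z : ↥(T γ), ⋃ w' : ↥(C z.val), {idx w'.val + 1}) with hA
  have hAbound : ∀ γ < μo, ∀ o ∈ A γ, o < μo := by
    intro γ hγ o ho
    rcases ho with ho | ho
    · obtain ⟨p, hp⟩ := Set.mem_iUnion.1 ho
      obtain ⟨o', ho', rfl⟩ := hp
      have h1 : o' < μo := (hf1 p.val).1 ho'
      show o' + 1 < μo
      rw [Ordinal.add_one_eq_succ]
      exact hμlim.succ_lt h1
    · obtain ⟨z, hz⟩ := Set.mem_iUnion.1 ho
      obtain ⟨w', hw'⟩ := Set.mem_iUnion.1 hz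
      rw [Set.mem_singleton_iff] at hw'
      subst hw'
      rw [Ordinal.add_one_eq_succ]
      exact hμlim.succ_lt (hidx γ hγ z.val z.2 w'.val w'.2).1
  have hAcard : ∀ γ < μo, #(A γ) ≤ Cardinal.lift.{1,0} κ := by
    intro γ hγ
    have hγκ : γ.card ≤ κ := by
      have := Cardinal.lt_ord.1 hγ
      exact Order.lt_succ_iff.1 this
    have hIio : #↥(Set.Iio γ) ≤ Cardinal.lift.{1,0} κ := by
      rw [Ordinal.mk_Iio_ordinal]
      exact Cardinal.lift_le.2 hγκ
    have hκℵ : Cardinal.aleph0 ≤ Cardinal.lift.{1,0} κ := by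
      rw [← Cardinal.lift_aleph0.{1,0}]; exact Cardinal.lift_le.2 hκ.1
    have h1 : #(⋃ p : {a : Finset Ordinal.{0} // ↑a ⊆ Set.Iio γ},
        (fun o => o + 1) '' f p.val) ≤ Cardinal.lift.{1,0} κ := by
      refine (Cardinal.mk_iUnion_le _).trans ?_
      have hidxle : #{a : Finset Ordinal.{0} // ↑a ⊆ Set.Iio γ} ≤ Cardinal.lift.{1,0} κ := by
        refine (TS_mk_finsub_le _).trans ?_
        exact max_le hIio hκℵ
      refine le_trans (mul_le_mul' hidxle (ciSup_le' fun p => ?_))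
        (by rw [Cardinal.mul_eq_self hκℵ])
      exact (Cardinal.mk_image_le).trans ((hf1 p.val).2.le)
    have h2 : #(⋃ z : ↥(T γ), ⋃ w' : ↥(C z.val), ({idx w'.val + 1} : Set Ordinal.{0})) ≤
        Cardinal.lift.{1,0} κ := by
      refine (Cardinal.mk_iUnion_le _).trans ?_
      refine le_trans (mul_le_mul' (hT γ hγ).2 (ciSup_le' fun z => ?_))
        (by rw [Cardinal.mul_eq_self hκℵ])
      refine (Cardinal.mk_iUnion_le _).trans ?_
      refine le_trans (mul_le_mul' (hC γ hγ z.val z.2).2.2.le (ciSup_le' fun w' => ?_))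
        (by rw [Cardinal.mul_eq_self hκℵ])
      rw [Cardinal.mk_singleton]
      exact Cardinal.one_le_aleph0.trans hκℵ
    rw [hA]
    refine (Cardinal.mk_union_le _ _).trans ?_
    refine le_trans (add_le_add h1 h2) (by rw [Cardinal.add_eq_self hκℵ])
  have hHex : ∀ γ, γ < μo → ∃ b < μo, ∀ o ∈ A γ, o < b := by
    intro γ hγ
    have := TS_exists_strict_ub hsucc (A γ) (fun o ho => hAbound γ hγ o ho)
      ((hAcard γ hγ).trans_lt (Cardinal.lift_lt.2 (Order.lt_succ κ)))
    exact this
  set H : Ordinal.{0} → Ordinal.{0} :=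
    fun γ => if h : γ < μo then (hHex γ h).choose else 0 with hHdef
  have hHspec : ∀ γ (h : γ < μo), H γ < μo ∧ ∀ o ∈ A γ, o < H γ := by
    intro γ h
    rw [hHdef]
    simp only [h, dif_pos]
    exact ⟨(hHex γ h).choose_spec.1, (hHex γ h).choose_spec.2⟩
  
  -- the sequence of closure points below μo
  set γseq : Ordinal.{0} → Ordinal.{0} := Ordinal.lt_wf.fix
    (fun j rec => if h : ∃ b, b < μo ∧ ∀ j' (hj' : j' < j),
        rec j' hj' < b ∧ H (rec j' hj') < b then h.choose else 0) with hγseqdef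
  have hγseq_eq : ∀ j, γseq j = if h : ∃ b, b < μo ∧ ∀ j' (hj' : j' < j),
      γseq j' < b ∧ H (γseq j') < b then h.choose else 0 := by
    intro j
    rw [hγseqdef]
    exact Ordinal.lt_wf.fix_eq _ j
  have hγseq_spec : ∀ j, j < κ.ord →
      γseq j < μo ∧ ∀ j' < j, γseq j' < γseq j ∧ H (γseq j') < γseq j := by
    intro j
    induction j using WellFoundedLT.induction with
    | _ j IH =>
    intro hj
    -- the previous values are < μo
    have hprev : ∀ j' < j, γseq j' < μo := fun j' hj' => (IH j' hj' (hj'.trans hj)).1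
    -- build the bound set
    have hexb : ∃ b, b < μo ∧ ∀ j' (hj' : j' < j), γseq j' < b ∧ H (γseq j') < b := by
      set S : Set Ordinal.{0} :=
        ⋃ p : ↥(Set.Iio j), ({γseq p.val + 1} ∪ {H (γseq p.val) + 1}) with hS
      have hSsub : S ⊆ Set.Iio μo := by
        rintro o ho
        obtain ⟨p, hp⟩ := Set.mem_iUnion.1 ho
        rcases hp with hp | hp
        · rw [Set.mem_singleton_iff] at hp; subst hp
          show γseq p.val + 1 < μo
          rw [Ordinal.add_one_eq_succ]
          exact hμlim.succ_lt (hprev p.val p.2)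
        · rw [Set.mem_singleton_iff] at hp; subst hp
          show H (γseq p.val) + 1 < μo
          rw [Ordinal.add_one_eq_succ]
          exact hμlim.succ_lt (hHspec _ (hprev p.val p.2)).1
      have hScard : #↥S < Cardinal.lift.{1,0} (Order.succ κ) := by
        have hκℵ : Cardinal.aleph0 ≤ Cardinal.lift.{1,0} κ := by
          rw [← Cardinal.lift_aleph0.{1,0}]; exact Cardinal.lift_le.2 hκ.1
        have h1 : #↥(Set.Iio j) ≤ Cardinal.lift.{1,0} κ := by
          rw [Ordinal.mk_Iio_ordinal]
          exact Cardinal.lift_le.2 (Cardinal.lt_ord.1 (hj.trans hκμ) |> Order.lt_succ_iff.1)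
        refine lt_of_le_of_lt ?_ (Cardinal.lift_lt.2 (Order.lt_succ κ))
        refine (Cardinal.mk_iUnion_le _).trans ?_
        refine le_trans (mul_le_mul' h1 (ciSup_le' fun p => ?_))
          (by rw [Cardinal.mul_eq_self hκℵ])
        refine (Cardinal.mk_union_le _ _).trans ?_
        rw [Cardinal.mk_singleton, Cardinal.mk_singleton]
        calc (1 : Cardinal.{1}) + 1 = 2 := one_add_one_eq_two
        _ ≤ Cardinal.aleph0 := by exact_mod_cast (Cardinal.nat_lt_aleph0 2).le
        _ ≤ Cardinal.lift.{1,0} κ := hκℵ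
      obtain ⟨b, hbμ, hb⟩ := TS_exists_strict_ub hsucc S hSsub hScard
      refine ⟨b, hbμ, fun j' hj' => ?_⟩
      have h1 : γseq j' + 1 ∈ S :=
        Set.mem_iUnion.2 ⟨⟨j', hj'⟩, Or.inl rfl⟩
      have h2 : H (γseq j') + 1 ∈ S :=
        Set.mem_iUnion.2 ⟨⟨j', hj'⟩, Or.inr rfl⟩
      exact ⟨lt_trans (lt_add_one _) (hb _ h1), lt_trans (lt_add_one _) (hb _ h2)⟩
    rw [hγseq_eq j]
    simp only [hexb, dif_pos]
    obtain ⟨h1, h2⟩ := hexb.choose_spec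
    exact ⟨h1, fun j' hj' => h2 j' hj'⟩
  
  -- the limit point γbar
  set tval : κ.ord.ToType → Ordinal.{0} :=
    fun j => (Ordinal.ToType.mk.symm j).val with htval
  have htval_lt : ∀ j, tval j < κ.ord := fun j => (Ordinal.ToType.mk.symm j).2
  set γbar : Ordinal.{0} := ⨆ j : κ.ord.ToType, γseq (tval j) with hγbar
  have hγbarμ : γbar < μo := by
    refine Cardinal.iSup_lt_ord_of_isRegular hsucc ?_ ?_
    · rw [Cardinal.mk_ord_toType]
      exact Order.lt_succ κ
    · intro j
      exact (hγseq_spec (tval j) (htval_lt j)).1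
  have hle_γbar : ∀ v < κ.ord, γseq v ≤ γbar := by
    intro v hv
    have : tval (Ordinal.ToType.mk ⟨v, hv⟩) = v := by
      rw [htval]
      simp
    calc γseq v = γseq (tval (Ordinal.ToType.mk ⟨v, hv⟩)) := by rw [this]
    _ ≤ γbar := Ordinal.le_iSup (fun j => γseq (tval j)) _
  have hlt_γbar : ∀ v < κ.ord, γseq v < γbar ∧ H (γseq v) < γbar := by
    intro v hv
    have hv1 : v + 1 < κ.ord := by
      rw [Ordinal.add_one_eq_succ]; exact hκlim.succ_lt hv
    have hspec := hγseq_spec (v+1) hv1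
    have h2 := hspec.2 v (lt_add_one v)
    exact ⟨h2.1.trans_le (hle_γbar _ hv1), h2.2.trans_le (hle_γbar _ hv1)⟩
  -- bounded subsets of γbar
  have hbounded : ∀ x : Set Ordinal.{0}, x ⊆ Set.Iio γbar →
      #↥x < Cardinal.lift.{1,0} κ → ∃ v < κ.ord, x ⊆ Set.Iio (γseq v) := by
    intro x hx hxc
    have hpick : ∀ o : ↥x, ∃ v, v < κ.ord ∧ o.val < γseq v := by
      intro o
      by_contra hcon
      push_neg at hcon
      have : γbar ≤ o.val := by
        rw [hγbar]
        refine Ordinal.iSup_le fun j => ?_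
        exact hcon (tval j) (htval_lt j)
      exact absurd (hx o.2) (not_lt.2 this)
    choose vv hvv1 hvv2 using hpick
    set V : Set Ordinal.{0} := Set.range vv with hV
    have hV1 : V ⊆ Set.Iio κ.ord := by rintro _ ⟨o, rfl⟩; exact hvv1 o
    have hV2 : #↥V < Cardinal.lift.{1,0} κ := lt_of_le_of_lt Cardinal.mk_range_le hxc
    obtain ⟨b, hbκ, hbb⟩ := TS_exists_strict_ub hκ V hV1 hV2
    refine ⟨b, hbκ, fun o ho => ?_⟩
    have h1 : vv ⟨o, ho⟩ < b := hbb _ ⟨⟨o, ho⟩, rfl⟩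
    have h2 := (hγseq_spec b hbκ).2 _ h1
    exact lt_trans (hvv2 ⟨o, ho⟩) h2.1
  -- covering indices below γbar
  have xiExists : ∀ y : Set Ordinal.{0}, y ⊆ Set.Iio γbar → cardLT y ν →
      ∃ ξ, ξ < γbar ∧ y ⊆ c ξ := by
    intro y hy hyν
    obtain ⟨v, hvκ, hyv⟩ := hbounded y hy (hyν.trans (Cardinal.lift_lt.2 hνκ))
    have hγvμ : γseq v < μo := (hγseq_spec v hvκ).1
    have hypkl : y ∈ pkl κ (γseq v) := ⟨hyv, hyν.trans (Cardinal.lift_lt.2 hνκ)⟩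
    obtain ⟨z'', hz''T, hyz''⟩ := (hT (γseq v) hγvμ).1.2.1 y hypkl
    obtain ⟨w', hw'C, hyw'⟩ := (hC (γseq v) hγvμ z'' hz''T).2.1 y hyz'' hyν
    have hidxw := hidx (γseq v) hγvμ z'' hz''T w' hw'C
    have hAmem : idx w' + 1 ∈ A (γseq v) := by
      rw [hA]
      refine Or.inr (Set.mem_iUnion.2 ⟨⟨z'', hz''T⟩, Set.mem_iUnion.2 ⟨⟨w', hw'C⟩, rfl⟩⟩)
    have h1 : idx w' + 1 < H (γseq v) := (hHspec _ hγvμ).2 _ hAmem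
    have h2 : H (γseq v) < γbar := (hlt_γbar v hvκ).2
    refine ⟨idx w', lt_trans (lt_trans (lt_add_one _) h1) h2, ?_⟩
    rw [hidxw.2]
    exact hyw'
  set ξof : Set Ordinal.{0} → Ordinal.{0} := fun y =>
    if h : y ⊆ Set.Iio γbar ∧ cardLT y ν then (xiExists y h.1 h.2).choose else 0 with hξofdef
  have hξof : ∀ y : Set Ordinal.{0}, y ⊆ Set.Iio γbar → cardLT y ν →
      ξof y < γbar ∧ y ⊆ c (ξof y) := by
    intro y h1 h2
    have h : y ⊆ Set.Iio γbar ∧ cardLT y ν := ⟨h1, h2⟩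
    rw [hξofdef]
    simp only [h, and_self, dif_pos]
    exact ⟨(xiExists y h.1 h.2).choose_spec.1, (xiExists y h.1 h.2).choose_spec.2⟩
  -- cofinal families
  set Yfam : Set Ordinal.{0} → Set (Set Ordinal.{0}) := fun W =>
    if h : cardLT W κ then (TS_cofinal_small hν hκ hνκ hcf W h).choose else ∅ with hYfamdef
  have hYfam : ∀ W : Set Ordinal.{0}, cardLT W κ →
      #↥(Yfam W) < Cardinal.lift.{1,0} κ ∧
      (∀ y ∈ Yfam W, y ⊆ W ∧ cardLT y ν) ∧
      (∀ x : Set Ordinal.{0}, x ⊆ W → cardLT x ν → ∃ y ∈ Yfam W, x ⊆ y) := by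
    intro W h
    rw [hYfamdef]
    simp only [h, dif_pos]
    exact (TS_cofinal_small hν hκ hνκ hcf W h).choose_spec
  
  have hκℵ : Cardinal.aleph0 ≤ Cardinal.lift.{1,0} κ := by
    rw [← Cardinal.lift_aleph0.{1,0}]; exact Cardinal.lift_le.2 hκ.1
  have hκℵlt : Cardinal.aleph0 < Cardinal.lift.{1,0} κ := by
    rw [← Cardinal.lift_aleph0.{1,0}]; exact Cardinal.lift_lt.2 hκu
  -- the step operator
  set stepF : Set Ordinal.{0} → Set Ordinal.{0} := fun W =>
    ⋃ p : {a : Finset Ordinal.{0} // ↑a ⊆ W}, f p.val with hstepFdef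
  set step : Set Ordinal.{0} → Set Ordinal.{0} := fun W =>
    W ∪ stepF W ∪ (ξof '' Yfam W) with hstepdef
  have hstep_self : ∀ W, W ⊆ step W := fun W =>
    (Set.subset_union_left).trans Set.subset_union_left
  have hstep_sub : ∀ W, W ∈ pkl κ γbar → step W ⊆ Set.Iio γbar := by
    intro W hW o ho
    rcases ho with (ho | ho) | ho
    · exact hW.1 ho
    · obtain ⟨p, hp⟩ := Set.mem_iUnion.1 ho
      have hafin : #↥(↑p.val : Set Ordinal.{0}) < Cardinal.lift.{1,0} κ :=
        lt_of_lt_of_le (Cardinal.lt_aleph0_of_finite _) hκℵ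
      obtain ⟨v, hvκ, hav⟩ := hbounded (↑p.val) (p.2.trans hW.1) hafin
      have hAmem : o + 1 ∈ A (γseq v) := by
        rw [hA]
        exact Or.inl (Set.mem_iUnion.2 ⟨⟨p.val, hav⟩, ⟨o, hp, rfl⟩⟩)
      have h1 : o + 1 < H (γseq v) := (hHspec _ (hγseq_spec v hvκ).1).2 _ hAmem
      exact lt_trans (lt_trans (lt_add_one _) h1) (hlt_γbar v hvκ).2
    · obtain ⟨y, hy, rfl⟩ := ho
      have hyp := (hYfam W hW.2).2.1 y hy
      exact (hξof y (hyp.1.trans hW.1) hyp.2).1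
  have hstep_card : ∀ W, W ∈ pkl κ γbar → #↥(step W) < Cardinal.lift.{1,0} κ := by
    intro W hW
    refine TS_small_union hκ.1 (TS_small_union hκ.1 hW.2 ?_) ?_
    · refine TS_small_iUnion hκ _ ?_ ?_
      · refine lt_of_le_of_lt (TS_mk_finsub_le W) ?_
        exact max_lt hW.2 hκℵlt
      · intro p
        exact (hf1 p.val).2
    · exact lt_of_le_of_lt Cardinal.mk_image_le (hYfam W hW.2).1
  -- cover within T γbar
  set covT : Set Ordinal.{0} → Set Ordinal.{0} := fun X =>
    if h : X ∈ pkl κ γbar then ((hT γbar hγbarμ).1.2.1 X h).choose else ∅ with hcovTdef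
  have hcovT : ∀ X ∈ pkl κ γbar, covT X ∈ T γbar ∧ X ⊆ covT X := by
    intro X h
    rw [hcovTdef]
    simp only [h, dif_pos]
    exact ⟨((hT γbar hγbarμ).1.2.1 X h).choose_spec.1,
      ((hT γbar hγbarμ).1.2.1 X h).choose_spec.2⟩
  -- the chain
  set w : Ordinal.{0} → Set Ordinal.{0} := Ordinal.lt_wf.fix
    (fun i rec => covT (⋃ p : ↥(Set.Iio i), step (rec p.val p.2))) with hwdef
  have hw_eq : ∀ i, w i = covT (⋃ p : ↥(Set.Iio i), step (w p.val)) := by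
    intro i
    rw [hwdef]
    exact Ordinal.lt_wf.fix_eq _ i
  have hwT : ∀ i, i < ν.ord → w i ∈ T γbar ∧ (⋃ p : ↥(Set.Iio i), step (w p.val)) ⊆ w i := by
    intro i
    induction i using WellFoundedLT.induction with
    | _ i IH =>
    intro hi
    have hSu : (⋃ p : ↥(Set.Iio i), step (w p.val)) ∈ pkl κ γbar := by
      constructor
      · refine Set.iUnion_subset fun p => ?_
        exact hstep_sub _ ((hT γbar hγbarμ).1.1 (IH p.val p.2 (p.2.trans hi)).1)
      · refine TS_small_iUnion hκ _ ?_ ?_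
        · rw [Ordinal.mk_Iio_ordinal]
          exact lt_of_lt_of_le (Cardinal.lift_lt.2 (Cardinal.lt_ord.1 (hi.trans hνκo)))
            le_rfl
        · intro p
          exact hstep_card _ ((hT γbar hγbarμ).1.1 (IH p.val p.2 (p.2.trans hi)).1)
    rw [hw_eq i]
    exact ⟨(hcovT _ hSu).1, (hcovT _ hSu).2⟩
  have hmono : ∀ i j, i ≤ j → j < ν.ord → w i ⊆ w j := by
    intro i j hij hj
    rcases eq_or_lt_of_le hij with rfl | hlt
    · exact subset_rfl
    · refine le_trans (hstep_self (w i)) (le_trans ?_ (hwT j hj).2)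
      intro o ho
      exact Set.mem_iUnion.2 ⟨⟨i, hlt⟩, ho⟩
  -- the witness
  set z : Set Ordinal.{0} := ⋃ i ∈ Set.Iio ν.ord, w i with hz
  have hzT : z ∈ T γbar := by
    rw [hz]
    exact (hT γbar hγbarμ).1.2.2 ν.ord w hν0.ne' hνκo hmono (fun i hi => (hwT i hi).1)
  have hzpklγ : z ∈ pkl κ γbar := (hT γbar hγbarμ).1.1 hzT
  have hzpkl : z ∈ pkl κ μo :=
    ⟨hzpklγ.1.trans (fun o (ho : o < γbar) => lt_trans ho hγbarμ), hzpklγ.2⟩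
  -- index picking within the chain
  set pickI : Ordinal.{0} → Ordinal.{0} := fun o =>
    if h : ∃ i, i < ν.ord ∧ o ∈ w i then h.choose else 0 with hpickIdef
  have hpickI : ∀ o ∈ z, pickI o < ν.ord ∧ o ∈ w (pickI o) := by
    intro o ho
    rw [hz] at ho
    obtain ⟨i, hi, hoi⟩ := Set.mem_iUnion₂.1 ho
    have h : ∃ i, i < ν.ord ∧ o ∈ w i := ⟨i, hi, hoi⟩
    rw [hpickIdef]
    simp only [h, dif_pos]
    exact ⟨h.choose_spec.1, h.choose_spec.2⟩
  have hwz : ∀ i < ν.ord, w i ⊆ z := by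
    intro i hi o ho
    rw [hz]
    exact Set.mem_iUnion₂.2 ⟨i, hi, ho⟩
  have hsucclt : ∀ i < ν.ord, i + 1 < ν.ord := by
    intro i hi
    rw [Ordinal.add_one_eq_succ]
    exact hνlim.succ_lt hi
  -- z is closed under f
  have hclosed : ∀ a : Finset Ordinal.{0}, ↑a ⊆ z → f a ⊆ z := by
    intro a ha
    obtain ⟨b, hbν, hab⟩ : ∃ b < ν.ord, (↑a : Set Ordinal.{0}) ⊆ w b := by
      rcases a.eq_empty_or_nonempty with rfl | hne
      · exact ⟨0, hν0, by simp⟩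
      · set b := a.sup' hne pickI with hb
        obtain ⟨o0, ho0, hb0⟩ := Finset.exists_mem_eq_sup' hne pickI
        have hbν : b < ν.ord := by
          rw [hb, hb0]
          exact (hpickI o0 (ha ho0)).1
        refine ⟨b, hbν, fun o ho => ?_⟩
        have h1 := hpickI o (ha ho)
        exact hmono (pickI o) b (Finset.le_sup' pickI ho) hbν h1.2
    have h2 : f a ⊆ step (w b) := by
      intro o ho
      refine Or.inl (Or.inr ?_)
      exact Set.mem_iUnion.2 ⟨⟨a, hab⟩, ho⟩
    have h3 : step (w b) ⊆ w (b+1) := by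
      refine le_trans ?_ (hwT (b+1) (hsucclt b hbν)).2
      intro o ho
      exact Set.mem_iUnion.2 ⟨⟨b, lt_add_one b⟩, ho⟩
    exact h2.trans (h3.trans (hwz _ (hsucclt b hbν)))
  have hzD : z ∈ D := hf3 z hzpkl hclosed
  -- the covering property
  have hcover : ∀ y : Set Ordinal.{0}, y ⊆ z → cardLT y ν → ∃ ξ ∈ z, y ⊆ c ξ := by
    intro y hy hyν
    obtain ⟨b, hbν, hyb⟩ : ∃ b < ν.ord, y ⊆ w b := by
      set V : Set Ordinal.{0} := Set.range (fun o : ↥y => pickI o.val) with hV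
      have hV1 : V ⊆ Set.Iio ν.ord := by
        rintro _ ⟨o, rfl⟩
        exact (hpickI o.val (hy o.2)).1
      have hV2 : #↥V < Cardinal.lift.{1,0} ν := lt_of_le_of_lt Cardinal.mk_range_le hyν
      obtain ⟨b, hbν, hbb⟩ := TS_exists_strict_ub hν V hV1 hV2
      refine ⟨b, hbν, fun o ho => ?_⟩
      have h1 : pickI o < b := hbb _ ⟨⟨o, ho⟩, rfl⟩
      exact hmono (pickI o) b h1.le hbν (hpickI o (hy ho)).2
    have hwb : w b ∈ pkl κ γbar := (hT γbar hγbarμ).1.1 (hwT b hbν).1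
    obtain ⟨y', hy'Y, hyy'⟩ := (hYfam (w b) hwb.2).2.2 y hyb hyν
    have hy'p := (hYfam (w b) hwb.2).2.1 y' hy'Y
    have hξ := hξof y' (hy'p.1.trans hwb.1) hy'p.2
    refine ⟨ξof y', ?_, hyy'.trans hξ.2⟩
    have h2 : ξof y' ∈ step (w b) := Or.inr ⟨y', hy'Y, rfl⟩
    have h3 : step (w b) ⊆ w (b+1) := by
      refine le_trans ?_ (hwT (b+1) (hsucclt b hbν)).2
      intro o ho
      exact Set.mem_iUnion.2 ⟨⟨b, lt_add_one b⟩, ho⟩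
    exact hwz _ (hsucclt b hbν) (h3 h2)
  exact ⟨z, ⟨⟨γbar, hγbarμ, hzT⟩, hcover⟩, hzD⟩
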